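/- Let U be a finite nonempty set and let f : U → ℝ be a function with f(i) ≠ 0 for all i ∈ U. Then the number of subsets T ⊆ U with ∑_{i∈T} f(i) ≠ 0 is at least 2^|U| / 2. -/

import Mathlib

theorem stmt_0 {ι : Type*} [DecidableEq ι] (U : Finset ι) (hU : U.Nonempty)
    (f : ι → ℝ) (hf : ∀ i ∈ U, f i ≠ 0) :
    (2 : ℝ) ^ U.card / 2 ≤
      ((U.powerset.filter (fun T => ∑ i ∈ T, f i ≠ 0)).card : ℝ) := by
  classical
  obtain ⟨a, ha⟩ := hU
  set N := U.powerset.filter (fun T => ∑ i ∈ T, f i ≠ 0) with hN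
  set Z := U.powerset.filter (fun T => ¬ (∑ i ∈ T, f i ≠ 0)) with hZ
  have hsum : Z.card + N.card = 2 ^ U.card := by
    rw [hZ, hN, add_comm, Finset.card_filter_add_card_filter_not]
    exact U.card_powerset
  have hle : Z.card ≤ N.card := by
    apply Finset.card_le_card_of_injOn
      (fun T => if a ∈ T then T.erase a else insert a T)
    · intro T hT
      simp only [hZ, Finset.mem_coe, Finset.mem_filter, Finset.mem_powerset, not_not] at hT
      obtain ⟨hTU, hT0⟩ := hT
      by_cases haT : a ∈ T
      · simp only [haT, if_true, hN, Finset.mem_coe, Finset.mem_filter, Finset.mem_powerset]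
        refine ⟨(Finset.erase_subset _ _).trans hTU, ?_⟩
        rw [Finset.sum_erase_eq_sub haT, hT0]
        simpa using hf a ha
      · simp only [haT, if_false, hN, Finset.mem_coe, Finset.mem_filter, Finset.mem_powerset]
        refine ⟨Finset.insert_subset ha hTU, ?_⟩
        rw [Finset.sum_insert haT, hT0, add_zero]
        exact hf a ha
    · intro T1 h1 T2 h2 heq
      by_cases h1a : a ∈ T1 <;> by_cases h2a : a ∈ T2 <;>
        simp only [h1a, h2a, if_true, if_false] at heq
      · have : insert a (T1.erase a) = insert a (T2.erase a) := by rw [heq]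
        rwa [Finset.insert_erase h1a, Finset.insert_erase h2a] at this
      · exact absurd (heq ▸ Finset.mem_insert_self a T2)
          (fun h => Finset.notMem_erase a T1 h)
      · exact absurd (heq ▸ Finset.mem_insert_self a T1)
          (fun h => Finset.notMem_erase a T2 h)
      · have h1' : (insert a T1).erase a = (insert a T2).erase a := by rw [heq]
        rwa [Finset.erase_insert h1a, Finset.erase_insert h2a] at h1'
  have h2 : 2 ^ U.card ≤ 2 * N.card := by omega
  have : (2 : ℝ) ^ U.card ≤ 2 * N.card := by exact_mod_cast h2
  linarith
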